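/- Let t ≥ 2 and q ≥ 2 be integers, let G be a finite t-broom-free graph, and let V_1, …, V_q be pairwise disjoint nonempty independent sets in G with |V_q| = t such that Q := G[V_1 ∪ ⋯ ∪ V_q] is a complete q-partite graph with parts V_1, …, V_q. Let W = {v ∈ N(V(Q)) : v is anticomplete to V_q}. Then ω(G[W]) ≤ ω(G) − 1; indeed, every clique of G[W] can be extended to a larger clique of G by adding a vertex of V_1 ∪ ⋯ ∪ V_{q-1}. -/

import Mathlib

open SimpleGraph

/-- The `t`-broom: `K_{1,t+1}` with one edge subdivided once.
Vertex `0` is `u₀`, vertex `1` is `v₁`, vertex `2` is `v₂`,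
and vertices `3, …, t+2` are `u₁, …, u_t`. -/
def tBroom (t : ℕ) : SimpleGraph (Fin (t + 3)) :=
  SimpleGraph.fromRel (fun a b =>
    (a = 0 ∧ b = 1) ∨ (a = 1 ∧ b = 2) ∨ (a = 0 ∧ 3 ≤ b.val))

/-- `G` is `H`-free: no induced subgraph of `G` is isomorphic to `H`.
(A graph embedding `H ↪g G` is exactly an isomorphism of `H` onto an induced subgraph of `G`.) -/
def Free {V W : Type*} (G : SimpleGraph V) (H : SimpleGraph W) : Prop :=
  ¬ Nonempty (H ↪g G)

/-- The neighborhood `N(S)` of a set `S`: vertices outside `S` with a neighbor in `S`. -/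
def nbhd {V : Type*} (G : SimpleGraph V) (S : Set V) : Set V :=
  {v | v ∉ S ∧ ∃ u ∈ S, G.Adj u v}

/-- `v` is complete to `S`: adjacent to every vertex of `S`. -/
def CompleteTo {V : Type*} (G : SimpleGraph V) (v : V) (S : Set V) : Prop :=
  ∀ u ∈ S, G.Adj v u

/-- `v` is anticomplete to `S`: adjacent to no vertex of `S`. -/
def AnticompleteTo {V : Type*} (G : SimpleGraph V) (v : V) (S : Set V) : Prop :=
  ∀ u ∈ S, ¬ G.Adj v u

/-- `v` is neutral to `S`: neither complete nor anticomplete to `S`. -/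
def NeutralTo {V : Type*} (G : SimpleGraph V) (v : V) (S : Set V) : Prop :=
  ¬ CompleteTo G v S ∧ ¬ AnticompleteTo G v S

/-- `S` is an independent set of size `s` in `G`. -/
def IsNIndepSet' {V : Type*} (G : SimpleGraph V) (s : ℕ) (S : Finset V) : Prop :=
  S.card = s ∧ ∀ u ∈ S, ∀ v ∈ S, u ≠ v → ¬ G.Adj u v

/-- `R` has the Ramsey property for `(s, n)`: every finite simple graph on at least `R`
vertices contains an independent set of size `s` or a clique of size `n`. -/
def RamseyProp (R s n : ℕ) : Prop :=
  ∀ (W : Type) [Fintype W] (H : SimpleGraph W), R ≤ Fintype.card W →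
    (∃ S : Finset W, IsNIndepSet' H s S) ∨ (∃ S : Finset W, H.IsNClique n S)

/-- The distance (in `ℕ∞`) from a set `S` to a vertex `v`:
the minimum over `u ∈ S` of the distance from `u` to `v`. -/
noncomputable def eDistSet {V : Type*} (G : SimpleGraph V) (S : Set V) (v : V) : ℕ∞ :=
  ⨅ u ∈ S, G.edist u v

/-- `N^i(S)`: the set of vertices (outside `S`) at distance exactly `i` from `S`. -/
noncomputable def distNbhd {V : Type*} (G : SimpleGraph V) (S : Set V) (i : ℕ) : Set V :=
  {v | v ∉ S ∧ eDistSet G S v = (i : ℕ∞)}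

/-- `N^{≥ i}(S) = ⋃_{j ≥ i} N^j(S)`. -/
noncomputable def distNbhdGe {V : Type*} (G : SimpleGraph V) (S : Set V) (i : ℕ) : Set V :=
  ⋃ j ∈ {j : ℕ | i ≤ j}, distNbhd G S j

/-- Given the union `U = V_1 ∪ ⋯ ∪ V_{q-1}` and the last part `Vq`, the set
`W_I = {v ∈ W : v complete to I, anticomplete to U \ I}`, where
`W = {v ∈ N(U ∪ Vq) : v anticomplete to Vq}`. -/
def Wpart {V : Type*} (G : SimpleGraph V) (U Vq I : Set V) : Set V :=
  {v ∈ nbhd G (U ∪ Vq) | AnticompleteTo G v Vq ∧ CompleteTo G v I ∧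
    AnticompleteTo G v (U \ I)}

lemma tBroom_adj (t : ℕ) (a b : Fin (t+3)) :
    (tBroom t).Adj a b ↔ a.val ≠ b.val ∧
      ((a.val = 0 ∧ b.val = 1) ∨ (a.val = 1 ∧ b.val = 2) ∨ (a.val = 0 ∧ 3 ≤ b.val) ∨
       (b.val = 0 ∧ a.val = 1) ∨ (b.val = 1 ∧ a.val = 2) ∨ (b.val = 0 ∧ 3 ≤ a.val)) := by
  have h0 : (0 : Fin (t+3)).val = 0 := rfl
  have h1 : (1 : Fin (t+3)).val = 1 := rfl
  have h2 : (2 : Fin (t+3)).val = 2 := rfl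
  simp only [tBroom, fromRel_adj, ne_eq, Fin.ext_iff, h0, h1, h2]
  tauto

lemma broom_of {t : ℕ} (ht : 0 < t) {V : Type} (G : SimpleGraph V)
    (x w w' : V) (g : Fin t → V) (hg : Function.Injective g)
    (hxw : G.Adj x w) (hww' : G.Adj w w') (hxw' : ¬ G.Adj x w') (hxw'ne : x ≠ w')
    (hxg : ∀ i, G.Adj x (g i))
    (hwg : ∀ i, ¬ G.Adj w (g i)) (hw'g : ∀ i, ¬ G.Adj w' (g i))
    (hgg : ∀ i j, ¬ G.Adj (g i) (g j))
    (hwgne : ∀ i, w ≠ g i) (hw'gne : ∀ i, w' ≠ g i) :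
    Nonempty (tBroom t ↪g G) := by
  have hlt : ∀ a : Fin (t+3), a.val - 3 < t := fun a => by omega
  let f : Fin (t+3) → V := fun a =>
    if a.val = 0 then x else if a.val = 1 then w else if a.val = 2 then w'
    else g ⟨a.val - 3, hlt a⟩
  have f0 : ∀ a : Fin (t+3), a.val = 0 → f a = x := fun a h => by simp only [f, h, ↓reduceIte]
  have f1 : ∀ a : Fin (t+3), a.val = 1 → f a = w := fun a h => by simp only [f, h, Nat.reduceEqDiff, ↓reduceIte]
  have f2 : ∀ a : Fin (t+3), a.val = 2 → f a = w' := fun a h => by simp only [f, h, Nat.reduceEqDiff, ↓reduceIte]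
  have f3 : ∀ a : Fin (t+3), 3 ≤ a.val → f a = g ⟨a.val - 3, hlt a⟩ := fun a h => by
    have h0 : a.val ≠ 0 := by omega
    have h1 : a.val ≠ 1 := by omega
    have h2 : a.val ≠ 2 := by omega
    simp only [f, h0, h1, h2, ↓reduceIte]
  have hxgne : ∀ i, x ≠ g i := fun i => (hxg i).ne
  have hinj : Function.Injective f := by
    intro a b hab
    have ha := a.isLt
    have hb := b.isLt
    rcases (by omega : a.val = 0 ∨ a.val = 1 ∨ a.val = 2 ∨ 3 ≤ a.val) with h|h|h|h <;>
      rcases (by omega : b.val = 0 ∨ b.val = 1 ∨ b.val = 2 ∨ 3 ≤ b.val) with h'|h'|h'|h' <;>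
      rw [show f a = _ from by first | exact f0 a h | exact f1 a h | exact f2 a h | exact f3 a h,
        show f b = _ from by first | exact f0 b h' | exact f1 b h' | exact f2 b h' | exact f3 b h'] at hab <;>
      first
      | (exact Fin.ext (by omega))
      | (exact absurd hab hxw.ne)
      | (exact absurd hab.symm hxw.ne)
      | (exact absurd hab hxw'ne)
      | (exact absurd hab.symm hxw'ne)
      | (exact absurd hab hww'.ne)
      | (exact absurd hab.symm hww'.ne)
      | (exact absurd hab (hxgne _))
      | (exact absurd hab.symm (hxgne _))
      | (exact absurd hab (hwgne _))
      | (exact absurd hab.symm (hwgne _))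
      | (exact absurd hab (hw'gne _))
      | (exact absurd hab.symm (hw'gne _))
      | (exact Fin.ext (by
          have h2 : (⟨a.val - 3, hlt a⟩ : Fin t) = ⟨b.val - 3, hlt b⟩ := hg hab
          have h3 : a.val - 3 = b.val - 3 := congrArg Fin.val h2
          omega))
  refine ⟨⟨⟨f, hinj⟩, ?_⟩⟩
  intro a b
  simp only [Function.Embedding.coeFn_mk]
  have ha := a.isLt
  have hb := b.isLt
  rw [tBroom_adj]
  rcases (by omega : a.val = 0 ∨ a.val = 1 ∨ a.val = 2 ∨ 3 ≤ a.val) with h|h|h|h <;>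
    rcases (by omega : b.val = 0 ∨ b.val = 1 ∨ b.val = 2 ∨ 3 ≤ b.val) with h'|h'|h'|h' <;>
    rw [show f a = _ from by first | exact f0 a h | exact f1 a h | exact f2 a h | exact f3 a h,
      show f b = _ from by first | exact f0 b h' | exact f1 b h' | exact f2 b h' | exact f3 b h']
  · exact iff_of_false (G.irrefl) (by rintro ⟨hne, _⟩; omega)
  · exact iff_of_true hxw ⟨by omega, by tauto⟩
  · exact iff_of_false hxw' (by rintro ⟨hne, hc⟩; omega)
  · exact iff_of_true (hxg _) ⟨by omega, by tauto⟩
  · exact iff_of_true hxw.symm ⟨by omega, by tauto⟩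
  · exact iff_of_false (G.irrefl) (by rintro ⟨hne, _⟩; omega)
  · exact iff_of_true hww' ⟨by omega, by tauto⟩
  · exact iff_of_false (hwg _) (by rintro ⟨hne, hc⟩; omega)
  · exact iff_of_false (fun hc => hxw' hc.symm) (by rintro ⟨hne, hc⟩; omega)
  · exact iff_of_true hww'.symm ⟨by omega, by tauto⟩
  · exact iff_of_false (G.irrefl) (by rintro ⟨hne, _⟩; omega)
  · exact iff_of_false (hw'g _) (by rintro ⟨hne, hc⟩; omega)
  · exact iff_of_true (hxg _).symm ⟨by omega, by tauto⟩
  · exact iff_of_false (fun hc => hwg _ hc.symm) (by rintro ⟨hne, hc⟩; omega)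
  · exact iff_of_false (fun hc => hw'g _ hc.symm) (by rintro ⟨hne, hc⟩; omega)
  · exact iff_of_false (hgg _ _) (by rintro ⟨hne, hc⟩; omega)

/-- With `Q = G[V_1 ∪ ⋯ ∪ V_q]` complete `q`-partite and
`W = {v ∈ N(V(Q)) : v anticomplete to V_q}`, we have `ω(G[W]) ≤ ω(G) - 1`; indeed every
clique of `G[W]` extends to a larger clique of `G` by adding a vertex of `V_1 ∪ ⋯ ∪ V_{q-1}`. -/
theorem cliqueNum_W_le (t q : ℕ) (ht : 2 ≤ t) (hq : 2 ≤ q)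
    (V : Type) [Fintype V] (G : SimpleGraph V) (hfree : _root_.Free G (tBroom t))
    (Vs : Fin (q - 1) → Set V) (Vq : Set V)
    (hne : ∀ i, (Vs i).Nonempty) (hVq : Vq.ncard = t)
    (hdisj : ∀ i j, i ≠ j → Disjoint (Vs i) (Vs j))
    (hdisjq : ∀ i, Disjoint (Vs i) Vq)
    (hindep : ∀ i, ∀ u ∈ Vs i, ∀ w ∈ Vs i, ¬ G.Adj u w)
    (hindepq : ∀ u ∈ Vq, ∀ w ∈ Vq, ¬ G.Adj u w)
    (hcomp : ∀ i j, i ≠ j → ∀ u ∈ Vs i, ∀ w ∈ Vs j, G.Adj u w)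
    (hcompq : ∀ i, ∀ u ∈ Vs i, ∀ w ∈ Vq, G.Adj u w) :
    (G.induce {v ∈ nbhd G ((⋃ i, Vs i) ∪ Vq) | AnticompleteTo G v Vq}).cliqueNum ≤
        G.cliqueNum - 1 ∧
      ∀ K : Finset V,
        ↑K ⊆ {v ∈ nbhd G ((⋃ i, Vs i) ∪ Vq) | AnticompleteTo G v Vq} →
        G.IsClique (K : Set V) →
        ∃ u ∈ ⋃ i, Vs i, u ∉ K ∧ G.IsClique (insert u (K : Set V)) := by
  classical
  set U : Set V := ⋃ i, Vs i with hU
  set W : Set V := {v ∈ nbhd G (U ∪ Vq) | AnticompleteTo G v Vq} with hWdef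
  -- an enumeration of Vq
  haveI : Fintype ↥Vq := Fintype.ofFinite _
  have hcard : Fintype.card ↥Vq = t := by
    rw [← Set.toFinset_card, ← Set.ncard_eq_toFinset_card']; exact hVq
  let e : ↥Vq ≃ Fin t := Fintype.equivFinOfCardEq hcard
  let g : Fin t → V := fun i => (e.symm i : V)
  have hg : Function.Injective g :=
    Subtype.val_injective.comp e.symm.injective
  have hgmem : ∀ i, g i ∈ Vq := fun i => (e.symm i).2
  -- the key extension property
  have key : ∀ K : Finset V, ↑K ⊆ W → G.IsClique (K : Set V) →
      ∃ u ∈ U, u ∉ K ∧ G.IsClique (insert u (K : Set V)) := by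
    intro K hKW hK
    rcases K.eq_empty_or_nonempty with rfl | ⟨w, hw⟩
    · obtain ⟨u, hu⟩ := hne ⟨0, by omega⟩
      refine ⟨u, Set.mem_iUnion.mpr ⟨_, hu⟩, Finset.notMem_empty u, by simp⟩
    · have hwW : w ∈ W := hKW hw
      obtain ⟨⟨hwnot, u, huUV, huw⟩, hwanti⟩ := hwW
      have huU : u ∈ U := by
        rcases huUV with h | h
        · exact h
        · exact absurd huw.symm (hwanti u h)
      obtain ⟨i0, hui0⟩ := Set.mem_iUnion.mp huU
      have hcompK : ∀ k ∈ (K : Set V), G.Adj u k := by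
        intro w' hw'
        by_contra huw'
        have hne' : w' ≠ w := fun hh => huw' (hh ▸ huw)
        have hw'W : w' ∈ W := hKW hw'
        obtain ⟨⟨hw'not, _⟩, hw'anti⟩ := hw'W
        have hadj : G.Adj w w' := hK (Finset.mem_coe.mpr hw) hw' hne'.symm
        refine hfree (broom_of (by omega) G u w w' g hg huw hadj huw' ?_
          (fun i => hcompq i0 u hui0 (g i) (hgmem i))
          (fun i => hwanti (g i) (hgmem i)) (fun i => hw'anti (g i) (hgmem i))
          (fun i j => hindepq (g i) (hgmem i) (g j) (hgmem j))
          (fun i hh => hwnot (hh ▸ Or.inr (hgmem i)))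
          (fun i hh => hw'not (hh ▸ Or.inr (hgmem i))))
        exact fun hh => hw'not (hh ▸ Or.inl huU)
      have huK : u ∉ K := fun huK => (hKW huK).1.1 (Or.inl huU)
      exact ⟨u, huU, huK, hK.insert (fun b hb _ => hcompK b hb)⟩
  refine ⟨?_, key⟩
  -- the clique-number bound
  haveI : Fintype ↥W := Fintype.ofFinite _
  obtain ⟨S, hS⟩ := (G.induce W).exists_isNClique_cliqueNum
  set K : Finset V := S.image Subtype.val with hKdef
  have hKcard : K.card = S.card := Finset.card_image_of_injective _ Subtype.val_injective
  have hKW : ↑K ⊆ W := by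
    intro v hv
    obtain ⟨a, _, rfl⟩ := Finset.mem_image.mp (Finset.mem_coe.mp hv)
    exact a.2
  have hKcl : G.IsClique (K : Set V) := by
    intro a ha b hb hab
    obtain ⟨a', ha', rfl⟩ := Finset.mem_image.mp (Finset.mem_coe.mp ha)
    obtain ⟨b', hb', rfl⟩ := Finset.mem_image.mp (Finset.mem_coe.mp hb)
    have : a' ≠ b' := fun hh => hab (congrArg Subtype.val hh)
    exact hS.isClique (Finset.mem_coe.mpr ha') (Finset.mem_coe.mpr hb') this
  obtain ⟨u, huU, huK, hcl⟩ := key K hKW hKcl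
  have hclF : G.IsClique ((insert u K : Finset V) : Set V) := by
    rw [Finset.coe_insert]; exact hcl
  have hle : (insert u K).card ≤ G.cliqueNum :=
    SimpleGraph.IsClique.card_le_cliqueNum (tc := hclF)
  rw [Finset.card_insert_of_notMem huK, hKcard, hS.card_eq] at hle
  omega
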